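/- Let E be a real Banach space, let τ > 0, let F : [0, ∞) → E be continuous, and let q : [0, ∞) → E be differentiable with τ·q'(t) + q(t) + F(t) = 0 for all t ≥ 0. Then for all t ≥ 0 one has ‖q(t)‖ ≤ e^{−t/τ}·‖q(0)‖ + (1 − e^{−t/τ})·sup_{s ∈ [0,t]} ‖F(s)‖. -/

import Mathlib

open Real MeasureTheory

/-- τ-uniform bound for the relaxation equation τ q' + q + F = 0 in a Banach space
(estimates (4.33)–(4.34) of the paper). -/
theorem relaxation_uniform_bound
    (E : Type*) [NormedAddCommGroup E] [NormedSpace ℝ E] [CompleteSpace E]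
    (τ : ℝ) (hτ : 0 < τ)
    (F q q' : ℝ → E)
    (hF : ContinuousOn F (Set.Ici 0))
    (hq : ∀ t ∈ Set.Ici (0:ℝ), HasDerivAt q (q' t) t)
    (heq : ∀ t ∈ Set.Ici (0:ℝ), τ • q' t + q t + F t = 0) :
    ∀ t ∈ Set.Ici (0:ℝ),
      ‖q t‖ ≤ Real.exp (-t / τ) * ‖q 0‖
        + (1 - Real.exp (-t / τ)) * ⨆ s ∈ Set.Icc (0:ℝ) t, ‖F s‖ := by
  intro t ht
  simp only [Set.mem_Ici] at ht
  set M : ℝ := ⨆ s ∈ Set.Icc (0:ℝ) t, ‖F s‖ with hM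
  have hIcc : Set.Icc (0:ℝ) t ⊆ Set.Ici 0 := fun x hx => hx.1
  have hne : (Set.Icc (0:ℝ) t).Nonempty := ⟨0, le_refl _, ht⟩
  have hbdd : BddAbove (Set.range fun i : Set.Icc (0:ℝ) t => ‖F i‖) := by
    have hc : IsCompact ((fun s => ‖F s‖) '' Set.Icc (0:ℝ) t) :=
      isCompact_Icc.image_of_continuousOn ((hF.mono hIcc).norm)
    have h := hc.bddAbove
    rwa [Set.image_eq_range] at h
  have hsub : M = ⨆ i : Set.Icc (0:ℝ) t, ‖F i‖ := by
    rw [hM]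
    refine (ciSup_subtype'' hbdd ?_).symm
    have h0 : ‖F 0‖ ≤ ⨆ i : Set.Icc (0:ℝ) t, ‖F i‖ := by
      have := le_ciSup hbdd (⟨0, le_refl _, ht⟩ : Set.Icc (0:ℝ) t)
      simpa using this
    calc sSup (∅ : Set ℝ) = 0 := Real.sSup_empty
      _ ≤ ‖F 0‖ := norm_nonneg _
      _ ≤ _ := h0
  have hFM : ∀ s ∈ Set.Icc (0:ℝ) t, ‖F s‖ ≤ M := by
    intro s hs
    rw [hsub]
    exact le_ciSup hbdd (⟨s, hs⟩ : Set.Icc (0:ℝ) t)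
  have hM0 : 0 ≤ M := le_trans (norm_nonneg _) (hFM 0 ⟨le_refl _, ht⟩)
  -- f s = exp(s/τ) • q s
  set f : ℝ → E := fun s => Real.exp (s / τ) • q s with hf
  set f' : ℝ → E := fun s => (-(Real.exp (s / τ) / τ)) • F s with hf'
  set B : ℝ → ℝ := fun s => ‖q 0‖ + M * (Real.exp (s / τ) - 1) with hB
  set B' : ℝ → ℝ := fun s => M * (Real.exp (s / τ) / τ) with hB'
  have hexp : ∀ s : ℝ, HasDerivAt (fun x => Real.exp (x / τ)) (Real.exp (s / τ) / τ) s := by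
    intro s
    have h1 : HasDerivAt (fun x : ℝ => x / τ) (1 / τ) s := by
      simpa using (hasDerivAt_id s).div_const τ
    have := (Real.hasDerivAt_exp (s / τ)).comp s h1
    simpa [Function.comp_def, mul_comm, div_eq_mul_inv, mul_assoc] using this
  have hderiv : ∀ s ∈ Set.Ici (0:ℝ), HasDerivAt f (f' s) s := by
    intro s hs
    have h2 := heq s hs
    have h3 : τ • q' s = -(q s + F s) := by
      rw [add_assoc] at h2
      exact add_eq_zero_iff_eq_neg.mp h2
    have hq' : q' s = -(τ⁻¹ • (q s + F s)) := by
      have h4 : q' s = τ⁻¹ • (τ • q' s) := by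
        rw [smul_smul, inv_mul_cancel₀ (ne_of_gt hτ), one_smul]
      rw [h4, h3, smul_neg]
    have h1 := (hexp s).smul (hq s hs)
    convert h1 using 1
    · rfl
    rw [hq', hf']
    simp only []
    rw [div_eq_mul_inv]
    module
  have hcont : ContinuousOn f (Set.Icc 0 t) := by
    intro x hx
    exact ((hderiv x (hIcc hx)).continuousAt).continuousWithinAt
  have hBd : ∀ x, HasDerivAt B (B' x) x := by
    intro x
    exact (((hexp x).sub_const 1).const_mul M).const_add ‖q 0‖
  have hfa : ‖f 0‖ ≤ B 0 := by
    simp [hf, hB]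
  have bound : ∀ x ∈ Set.Ico (0:ℝ) t, ‖f' x‖ ≤ B' x := by
    intro x hx
    have hx' : x ∈ Set.Icc (0:ℝ) t := ⟨hx.1, le_of_lt hx.2⟩
    have he : 0 < Real.exp (x / τ) / τ := div_pos (Real.exp_pos _) hτ
    show ‖(-(Real.exp (x / τ) / τ)) • F x‖ ≤ M * (Real.exp (x / τ) / τ)
    rw [norm_smul, Real.norm_eq_abs, abs_neg, abs_of_pos he, mul_comm M]
    exact mul_le_mul_of_nonneg_left (hFM x hx') (le_of_lt he)
  have main : ∀ ⦃x⦄, x ∈ Set.Icc (0:ℝ) t → ‖f x‖ ≤ B x :=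
    image_norm_le_of_norm_deriv_right_le_deriv_boundary hcont
      (fun x hx => (hderiv x hx.1).hasDerivWithinAt) hfa hBd bound
  have hmt' := main (Set.right_mem_Icc.mpr ht)
  rw [hf, hB] at hmt'
  simp only [] at hmt'
  have hnorm : ‖Real.exp (t / τ) • q t‖ = Real.exp (t / τ) * ‖q t‖ := by
    rw [norm_smul, Real.norm_eq_abs, abs_of_pos (Real.exp_pos _)]
  rw [hnorm] at hmt'
  have hepos : 0 < Real.exp (t / τ) := Real.exp_pos _
  have hinv : Real.exp (-t / τ) = (Real.exp (t / τ))⁻¹ := by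
    rw [← Real.exp_neg]; ring_nf
  rw [hinv]
  have hle := mul_le_mul_of_nonneg_left hmt' (le_of_lt (inv_pos.mpr hepos))
  calc ‖q t‖ = (Real.exp (t / τ))⁻¹ * (Real.exp (t / τ) * ‖q t‖) := by
        rw [← mul_assoc, inv_mul_cancel₀ (ne_of_gt hepos), one_mul]
    _ ≤ (Real.exp (t / τ))⁻¹ * (‖q 0‖ + M * (Real.exp (t / τ) - 1)) := hle
    _ = (Real.exp (t / τ))⁻¹ * ‖q 0‖ + (1 - (Real.exp (t / τ))⁻¹) * M := by
        field_simp
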